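/- Let d ≥ 7 be an odd integer and k = ⌊d/4⌋. Suppose b_1,...,b_k are real numbers satisfying, for all 1 ≤ i, m ≤ k, ∑_{j=1}^{k} b_j/(d - 2i - 2j) = ∑_{j=1}^{k} b_j/(d - 2m - 2j). Then there exist positive constants c_1(d), c_2(d) depending only on d with c_1(d) ∑_{j=1}^{k} b_j^2 ≤ (∑_{j=1}^{k} b_j/(d - 2 - 2j))^2 ≤ c_2(d) ∑_{j=1}^{k} b_j^2. -/

import Mathlib

open Finset Polynomial

private lemma denom_ne (d : ℕ) (hd : Odd d) (i j : ℕ) : (d:ℝ) - 2*i - 2*j ≠ 0 := by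
  intro h
  have hd2 : (d:ℝ) = 2*(i+j) := by linarith
  have hdn : d = 2*(i+j) := by exact_mod_cast hd2
  rw [hdn, Nat.odd_iff] at hd
  omega

private lemma cauchy_inj (d k : ℕ) (hd : Odd d) (b : ℕ → ℝ)
    (h : ∀ i ∈ Finset.Icc 1 k, ∑ j ∈ Finset.Icc 1 k, b j / ((d:ℝ) - 2*i - 2*j) = 0) :
    ∀ j ∈ Finset.Icc 1 k, b j = 0 := by
  classical
  rcases Nat.eq_zero_or_pos k with rfl | hk
  · simp
  set S := Finset.Icc 1 k with hS
  have hcardS : S.card = k := by simp [hS]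
  set P : ℝ[X] := ∑ j ∈ S, C (b j) * ∏ l ∈ S.erase j, (X - C (2*(l:ℝ))) with hP
  have hPeval : ∀ i ∈ S, P.eval ((d:ℝ) - 2*i) = 0 := by
    intro i hi
    have key : P.eval ((d:ℝ) - 2*i)
        = (∏ l ∈ S, ((d:ℝ) - 2*i - 2*l)) * ∑ j ∈ S, b j / ((d:ℝ) - 2*i - 2*j) := by
      rw [hP, eval_finset_sum, Finset.mul_sum]
      refine Finset.sum_congr rfl fun j hj => ?_
      rw [eval_mul, eval_C, eval_prod]
      simp only [eval_sub, eval_X, eval_C]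
      rw [← Finset.mul_prod_erase S (fun l => (d:ℝ) - 2*i - 2*l) hj]
      have hne := denom_ne d hd i j
      field_simp
    rw [key, h i hi, mul_zero]
  have hdeg : P.natDegree < k := by
    have h1 : P.natDegree ≤ k - 1 := by
      apply Polynomial.natDegree_sum_le_of_forall_le
      intro j hj
      refine le_trans (natDegree_C_mul_le _ _) ?_
      rw [Polynomial.natDegree_prod_of_monic _ _ (fun l _ => monic_X_sub_C _)]
      simp only [natDegree_X_sub_C, Finset.sum_const, smul_eq_mul, mul_one,
        Finset.card_erase_of_mem hj, hcardS]
      omega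
    omega
  have hPzero : P = 0 := by
    apply Polynomial.eq_zero_of_natDegree_lt_card_of_eval_eq_zero' P
      (S.image fun i : ℕ => (d:ℝ) - 2*i)
    · intro x hx
      obtain ⟨i, hi, rfl⟩ := Finset.mem_image.mp hx
      exact hPeval i hi
    · rw [Finset.card_image_of_injOn]
      · omega
      · intro a _ c _ hac
        simp only at hac
        have : (a:ℝ) = c := by linarith
        exact_mod_cast this
  intro j hj
  have hev : P.eval (2*(j:ℝ)) = 0 := by rw [hPzero]; simp
  rw [hP, eval_finset_sum] at hev
  rw [Finset.sum_eq_single_of_mem j hj] at hev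
  · rw [eval_mul, eval_C, eval_prod] at hev
    simp only [eval_sub, eval_X, eval_C] at hev
    have hprod : ∏ l ∈ S.erase j, (2*(j:ℝ) - 2*l) ≠ 0 := by
      rw [Finset.prod_ne_zero_iff]
      intro l hl hzero
      have hlj : l ≠ j := Finset.ne_of_mem_erase hl
      have : (j:ℝ) = l := by linarith
      exact hlj (by exact_mod_cast this.symm)
    exact (mul_eq_zero.mp hev).resolve_right hprod
  · intro j' hj' hne
    rw [eval_mul, eval_prod]
    have : Polynomial.eval (2*(j:ℝ)) (X - C (2*(j:ℝ))) = 0 := by simp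
    rw [Finset.prod_eq_zero (Finset.mem_erase.mpr ⟨hne.symm, hj⟩)]
    · rw [mul_zero]
    · simp

private def Hyp (d : ℕ) (b : ℕ → ℝ) : Prop :=
  ∀ i ∈ Finset.Icc 1 (d / 4), ∀ m ∈ Finset.Icc 1 (d / 4),
    ∑ j ∈ Finset.Icc 1 (d / 4), b j / ((d : ℝ) - 2 * (i:ℝ) - 2 * (j:ℝ)) =
    ∑ j ∈ Finset.Icc 1 (d / 4), b j / ((d : ℝ) - 2 * (m:ℝ) - 2 * (j:ℝ))

private noncomputable def Lf (d : ℕ) (b : ℕ → ℝ) : ℝ :=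
  ∑ j ∈ Finset.Icc 1 (d / 4), b j / ((d : ℝ) - 2 - 2 * (j:ℝ))

private lemma lemB (d : ℕ) (hd : Odd d) (hd7 : 7 ≤ d) (b : ℕ → ℝ)
    (hb : Hyp d b) (hL : Lf d b = 0) : ∀ j ∈ Finset.Icc 1 (d / 4), b j = 0 := by
  apply cauchy_inj d (d / 4) hd
  intro i hi
  have h1 : (1:ℕ) ∈ Finset.Icc 1 (d / 4) := Finset.mem_Icc.mpr ⟨le_refl _, by omega⟩
  rw [hb i hi 1 h1]
  simpa only [Lf, Nat.cast_one, mul_one] using hL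

private lemma hyp_comb (d : ℕ) (a c : ℝ) (b b' : ℕ → ℝ) (hb : Hyp d b) (hb' : Hyp d b') :
    Hyp d (fun j => a * b j - c * b' j) := by
  intro i hi m hm
  simp only [sub_div, mul_div_assoc, Finset.sum_sub_distrib, ← Finset.mul_sum]
  rw [hb i hi m hm, hb' i hi m hm]

private lemma lf_comb (d : ℕ) (a c : ℝ) (b b' : ℕ → ℝ) :
    Lf d (fun j => a * b j - c * b' j) = a * Lf d b - c * Lf d b' := by
  simp only [Lf, sub_div, mul_div_assoc, Finset.sum_sub_distrib, ← Finset.mul_sum]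

/-- Let `d ≥ 7` be odd and `k = ⌊d/4⌋`. If `b 1, …, b k` satisfy that
`∑_j b j/(d - 2i - 2j)` is independent of `i ∈ [1, k]`, then
`(∑_j b j/(d - 2 - 2j))²` is comparable to `∑_j (b j)²` with constants depending
only on `d`. -/
theorem b_comparability (d : ℕ) (hd : Odd d) (hd7 : 7 ≤ d) :
    ∃ c₁ c₂ : ℝ, 0 < c₁ ∧ 0 < c₂ ∧
      ∀ b : ℕ → ℝ,
        (∀ i ∈ Finset.Icc 1 (d / 4), ∀ m ∈ Finset.Icc 1 (d / 4),
          ∑ j ∈ Finset.Icc 1 (d / 4),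
              b j / ((d : ℝ) - 2 * (i : ℝ) - 2 * (j : ℝ)) =
            ∑ j ∈ Finset.Icc 1 (d / 4),
              b j / ((d : ℝ) - 2 * (m : ℝ) - 2 * (j : ℝ))) →
        (c₁ * ∑ j ∈ Finset.Icc 1 (d / 4), (b j) ^ 2 ≤
            (∑ j ∈ Finset.Icc 1 (d / 4), b j / ((d : ℝ) - 2 - 2 * (j : ℝ))) ^ 2 ∧
          (∑ j ∈ Finset.Icc 1 (d / 4), b j / ((d : ℝ) - 2 - 2 * (j : ℝ))) ^ 2 ≤
            c₂ * ∑ j ∈ Finset.Icc 1 (d / 4), (b j) ^ 2) := by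
  classical
  have h1S : (1:ℕ) ∈ Finset.Icc 1 (d / 4) := Finset.mem_Icc.mpr ⟨le_refl _, by omega⟩
  have hd7R : (7:ℝ) ≤ (d:ℝ) := by exact_mod_cast hd7
  -- the upper constant
  set c₂ : ℝ := ∑ j ∈ Finset.Icc 1 (d / 4), (((d:ℝ) - 2 - 2*(j:ℝ))⁻¹)^2 with hc₂
  have hc₂pos : 0 < c₂ := by
    apply Finset.sum_pos' (fun j _ => sq_nonneg _)
    refine ⟨1, h1S, ?_⟩
    have : (0:ℝ) < (d:ℝ) - 2 - 2*((1:ℕ):ℝ) := by push_cast; linarith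
    exact pow_pos (inv_pos.mpr this) 2
  have hub : ∀ b : ℕ → ℝ, (Lf d b)^2 ≤ c₂ * ∑ j ∈ Finset.Icc 1 (d / 4), (b j)^2 := by
    intro b
    have := Finset.sum_mul_sq_le_sq_mul_sq (Finset.Icc 1 (d / 4)) b
      (fun j => ((d:ℝ) - 2 - 2*(j:ℝ))⁻¹)
    calc (Lf d b)^2 = (∑ j ∈ Finset.Icc 1 (d / 4), b j * ((d:ℝ) - 2 - 2*(j:ℝ))⁻¹)^2 := by
          simp only [Lf, div_eq_mul_inv]
      _ ≤ (∑ j ∈ Finset.Icc 1 (d / 4), (b j)^2) * c₂ := this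
      _ = c₂ * ∑ j ∈ Finset.Icc 1 (d / 4), (b j)^2 := mul_comm _ _
  by_cases hW : ∀ b : ℕ → ℝ, Hyp d b → ∀ j ∈ Finset.Icc 1 (d / 4), b j = 0
  · refine ⟨1, c₂, one_pos, hc₂pos, fun b hb => ?_⟩
    have hz := hW b hb
    have hS0 : ∑ j ∈ Finset.Icc 1 (d / 4), (b j)^2 = 0 :=
      Finset.sum_eq_zero fun j hj => by rw [hz j hj]; ring
    have hL0 : ∑ j ∈ Finset.Icc 1 (d / 4), b j / ((d:ℝ) - 2 - 2*(j:ℝ)) = 0 :=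
      Finset.sum_eq_zero fun j hj => by rw [hz j hj]; simp
    rw [hS0, hL0]
    norm_num
  · push_neg at hW
    obtain ⟨b₀, hb₀, j₀, hj₀S, hj₀⟩ := hW
    have hSq₀ : 0 < ∑ j ∈ Finset.Icc 1 (d / 4), (b₀ j)^2 := by
      apply Finset.sum_pos' (fun j _ => sq_nonneg _)
      exact ⟨j₀, hj₀S, lt_of_le_of_ne (sq_nonneg _) (Ne.symm (pow_ne_zero 2 hj₀))⟩
    have hL₀ : Lf d b₀ ≠ 0 := fun h0 => hj₀ (lemB d hd hd7 b₀ hb₀ h0 j₀ hj₀S)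
    refine ⟨(Lf d b₀)^2 / ∑ j ∈ Finset.Icc 1 (d / 4), (b₀ j)^2, c₂,
      div_pos (lt_of_le_of_ne (sq_nonneg _) (Ne.symm (pow_ne_zero 2 hL₀))) hSq₀,
      hc₂pos, fun b hb => ?_⟩
    have hbHyp : Hyp d b := hb
    set w : ℕ → ℝ := fun j => Lf d b₀ * b j - Lf d b * b₀ j with hw
    have hwHyp : Hyp d w := hyp_comb d _ _ b b₀ hbHyp hb₀
    have hwL : Lf d w = 0 := by rw [lf_comb]; ring
    have hwz := lemB d hd hd7 w hwHyp hwL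
    have hkey : (Lf d b₀)^2 * ∑ j ∈ Finset.Icc 1 (d / 4), (b j)^2
        = (Lf d b)^2 * ∑ j ∈ Finset.Icc 1 (d / 4), (b₀ j)^2 := by
      rw [Finset.mul_sum, Finset.mul_sum]
      refine Finset.sum_congr rfl fun j hj => ?_
      have h0 : Lf d b₀ * b j - Lf d b * b₀ j = 0 := hwz j hj
      have : Lf d b₀ * b j = Lf d b * b₀ j := by linarith
      calc (Lf d b₀)^2 * (b j)^2 = (Lf d b₀ * b j)^2 := by ring
        _ = (Lf d b * b₀ j)^2 := by rw [this]
        _ = (Lf d b)^2 * (b₀ j)^2 := by ring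
    have heq : (Lf d b₀)^2 / (∑ j ∈ Finset.Icc 1 (d / 4), (b₀ j)^2)
        * ∑ j ∈ Finset.Icc 1 (d / 4), (b j)^2 = (Lf d b)^2 := by
      rw [div_mul_eq_mul_div, hkey, mul_div_assoc,
        div_self (ne_of_gt hSq₀), mul_one]
    constructor
    · exact le_of_eq (by simpa only [Lf] using heq)
    · simpa only [Lf] using hub b
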